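/- For every real t and u with t ≠ 1 and t ≠ exp(u(t-1)), the exponential generating function of the Eulerian polynomials satisfies ∑_{n≥0} A_n(t) u^n / n! = (t-1)/(t - exp(u(t-1))), the series converging for |u| sufficiently small. -/

import Mathlib

open scoped Classical

open Finset

/-- Number of ascents of a permutation of `Fin n`:
positions `j` with `j + 1 < n` and `π j < π (j+1)`. -/
noncomputable def ascentCount {n : ℕ} (π : Equiv.Perm (Fin n)) : ℕ :=
  ((Finset.range (n - 1)).filter (fun j =>
    ∃ h : j + 1 < n, π ⟨j, Nat.lt_of_succ_lt h⟩ < π ⟨j + 1, h⟩)).card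

/-- The Eulerian number `A_{n,k}`: the number of permutations of an `n`-element
linearly ordered set with exactly `k` ascents. -/
noncomputable def eulerian (n k : ℕ) : ℕ :=
  (Finset.univ.filter (fun π : Equiv.Perm (Fin n) => ascentCount π = k)).card

/-- The `n`-th Eulerian polynomial `A_n(t) = ∑_{k=0}^{n-1} A_{n,k} t^k`, with `A_0(t) = 1`. -/
noncomputable def eulerianPoly (n : ℕ) (t : ℝ) : ℝ :=
  if n = 0 then 1 else ∑ k ∈ Finset.range n, (eulerian n k : ℝ) * t ^ k

noncomputable def ascSet {n : ℕ} (π : Equiv.Perm (Fin n)) : Finset ℕ :=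
  (Finset.range (n - 1)).filter (fun j =>
    ∃ h : j + 1 < n, π ⟨j, Nat.lt_of_succ_lt h⟩ < π ⟨j + 1, h⟩)

lemma ascentCount_eq {n : ℕ} (π : Equiv.Perm (Fin n)) : ascentCount π = (ascSet π).card := rfl

lemma mem_ascSet {n : ℕ} (π : Equiv.Perm (Fin n)) (j : ℕ) :
    j ∈ ascSet π ↔ ∃ h : j + 1 < n, π ⟨j, Nat.lt_of_succ_lt h⟩ < π ⟨j + 1, h⟩ := by
  simp only [ascSet, Finset.mem_filter, Finset.mem_range, and_iff_right_iff_imp]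
  rintro ⟨h, -⟩
  omega

lemma ascSet_subset {n : ℕ} (π : Equiv.Perm (Fin n)) : ascSet π ⊆ Finset.range (n-1) :=
  Finset.filter_subset _ _

/-- L1 -/
lemma eulerianPoly_eq_sum_perm (n : ℕ) (t : ℝ) :
    eulerianPoly n t = ∑ π : Equiv.Perm (Fin n), t ^ ascentCount π := by
  rcases Nat.eq_zero_or_pos n with h | h
  · subst h
    simp [eulerianPoly, ascentCount]
  · rw [eulerianPoly, if_neg h.ne']
    have hmaps : ∀ π : Equiv.Perm (Fin n), π ∈ (Finset.univ : Finset (Equiv.Perm (Fin n))) →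
        ascentCount π ∈ Finset.range n := by
      intro π _
      refine Finset.mem_range.2 ?_
      calc ascentCount π ≤ (Finset.range (n-1)).card := Finset.card_le_card (ascSet_subset π)
        _ < n := by rw [Finset.card_range]; omega
    rw [← Finset.sum_fiberwise_of_maps_to hmaps (fun π => t ^ ascentCount π)]
    refine Finset.sum_congr rfl fun k _ => ?_
    rw [eulerian, Finset.sum_congr rfl (fun π hπ => by
      rw [(Finset.mem_filter.1 hπ).2]), Finset.sum_const, nsmul_eq_mul]

/-- L2 -/
lemma sum_powerset_pow_card (A : Finset ℕ) (x : ℝ) :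
    ∑ S ∈ A.powerset, x ^ S.card = (x + 1) ^ A.card := by
  rw [Finset.sum_powerset_apply_card (fun j => (x:ℝ) ^ j), add_pow]
  simp [mul_comm]

noncomputable def M (n : ℕ) (S : Finset ℕ) : ℕ :=
  ((Finset.univ : Finset (Equiv.Perm (Fin n))).filter (fun π => S ⊆ ascSet π)).card

/-- L3 -/
lemma eulerianPoly_eq_sum_subsets (n : ℕ) (t : ℝ) :
    eulerianPoly n t = ∑ S ∈ (Finset.range (n-1)).powerset, (t-1) ^ S.card * (M n S : ℝ) := by
  rw [eulerianPoly_eq_sum_perm]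
  have h1 : ∀ π : Equiv.Perm (Fin n), t ^ ascentCount π
      = ∑ S ∈ (Finset.range (n-1)).powerset, if S ⊆ ascSet π then (t-1) ^ S.card else 0 := by
    intro π
    have h2 : (Finset.range (n-1)).powerset.filter (fun S => S ⊆ ascSet π)
        = (ascSet π).powerset := by
      ext S
      simp only [Finset.mem_filter, Finset.mem_powerset, and_iff_right_iff_imp]
      exact fun hS => hS.trans (ascSet_subset π)
    rw [← Finset.sum_filter, h2, sum_powerset_pow_card, sub_add_cancel, ascentCount_eq]
  simp only [h1]
  rw [Finset.sum_comm]
  refine Finset.sum_congr rfl fun S _ => ?_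
  rw [Finset.sum_ite, Finset.sum_const_zero, add_zero, Finset.sum_const, nsmul_eq_mul, M,
    mul_comm]

/-- Start of the terminal run of `S` (as a subset of `range (n-1)`). -/
noncomputable def key (n : ℕ) (S : Finset ℕ) : ℕ :=
  sInf {k | Finset.Ico k (n-1) ⊆ S}

lemma key_mem (n : ℕ) (S : Finset ℕ) : Finset.Ico (key n S) (n-1) ⊆ S := by
  have : (n-1) ∈ {k | Finset.Ico k (n-1) ⊆ S} := by simp [Set.mem_setOf_eq]
  exact Nat.sInf_mem (Set.nonempty_of_mem this)

lemma key_le (n : ℕ) (S : Finset ℕ) : key n S ≤ n - 1 :=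
  Nat.sInf_le (by simp [Set.mem_setOf_eq])

lemma key_pred_not_mem (n : ℕ) (S : Finset ℕ) (hk : key n S ≠ 0) : (key n S) - 1 ∉ S := by
  intro hmem
  have h1 : key n S - 1 ∈ {k | Finset.Ico k (n-1) ⊆ S} := by
    simp only [Set.mem_setOf_eq]
    intro x hx
    rw [Finset.mem_Ico] at hx
    rcases Nat.eq_or_lt_of_le hx.1 with h | h
    · exact h ▸ hmem
    · exact key_mem n S (Finset.mem_Ico.2 ⟨by omega, hx.2⟩)
  have h2 : key n S ≤ key n S - 1 := Nat.sInf_le h1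
  omega

lemma key_union (n k : ℕ) (hk : k < n) (S₀ : Finset ℕ) (hS₀ : S₀ ⊆ Finset.range (k-1)) :
    key n (S₀ ∪ Finset.Ico k (n-1)) = k := by
  have h1 : key n (S₀ ∪ Finset.Ico k (n-1)) ≤ k :=
    Nat.sInf_le (by simp [Set.mem_setOf_eq])
  rcases Nat.eq_or_lt_of_le h1 with h | h
  · exact h
  · exfalso
    set m := key n (S₀ ∪ Finset.Ico k (n-1)) with hm
    have hmem : (k - 1 : ℕ) ∈ S₀ ∪ Finset.Ico k (n-1) :=
      key_mem n (S₀ ∪ Finset.Ico k (n-1)) (Finset.mem_Ico.2 ⟨by omega, by omega⟩)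
    rcases Finset.mem_union.1 hmem with h' | h'
    · have := Finset.mem_range.1 (hS₀ h')
      omega
    · rw [Finset.mem_Ico] at h'
      omega

/-- membership-style characterization used for decomposition -/
lemma eq_union_of_key (n : ℕ) (S : Finset ℕ) (hS : S ⊆ Finset.range (n-1)) :
    S = (S ∩ Finset.range (key n S - 1)) ∪ Finset.Ico (key n S) (n-1) := by
  apply Finset.Subset.antisymm
  · intro x hx
    have hxn : x < n - 1 := Finset.mem_range.1 (hS hx)
    rcases lt_or_ge x (key n S) with h | h
    · have hne : key n S = 0 → False := by omega
      have : x ≠ key n S - 1 := by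
        intro he
        exact key_pred_not_mem n S (by omega) (he ▸ hx)
      exact Finset.mem_union_left _ (Finset.mem_inter.2 ⟨hx, Finset.mem_range.2 (by omega)⟩)
    · exact Finset.mem_union_right _ (Finset.mem_Ico.2 ⟨h, hxn⟩)
  · intro x hx
    rcases Finset.mem_union.1 hx with h | h
    · exact (Finset.mem_inter.1 h).1
    · exact key_mem n S h

section build
variable {n k : ℕ} (T : Finset (Fin n)) (hT : T.card = k)
  (σ : Equiv.Perm (Fin k))

lemma card_compl_T (hT : T.card = k) : Tᶜ.card = n - k := by
  rw [Finset.card_compl, hT, Fintype.card_fin]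

noncomputable def buildFun : Fin n → Fin n := fun i =>
  if h : i.val < k then T.orderEmbOfFin hT (σ ⟨i.val, h⟩)
  else Tᶜ.orderEmbOfFin (card_compl_T T hT) ⟨i.val - k, by have := i.isLt; omega⟩

lemma buildFun_lt {i : Fin n} (h : i.val < k) :
    buildFun T hT σ i = T.orderEmbOfFin hT (σ ⟨i.val, h⟩) := by
  rw [buildFun, dif_pos h]

lemma buildFun_ge {i : Fin n} (h : ¬ i.val < k) :
    buildFun T hT σ i
      = Tᶜ.orderEmbOfFin (card_compl_T T hT) ⟨i.val - k, by have := i.isLt; omega⟩ := by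
  rw [buildFun, dif_neg h]

lemma buildFun_injective : Function.Injective (buildFun T hT σ) := by
  intro i j hij
  by_cases h1 : i.val < k <;> by_cases h2 : j.val < k
  · rw [buildFun_lt T hT σ h1, buildFun_lt T hT σ h2] at hij
    have h3 := σ.injective ((T.orderEmbOfFin hT).injective hij)
    exact Fin.ext (Fin.mk_eq_mk.1 h3)
  · exfalso
    rw [buildFun_lt T hT σ h1, buildFun_ge T hT σ h2] at hij
    have hm1 : T.orderEmbOfFin hT (σ ⟨i.val, h1⟩) ∈ T := Finset.orderEmbOfFin_mem _ _ _
    have hm2 : Tᶜ.orderEmbOfFin (card_compl_T T hT)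
        ⟨j.val - k, by have := j.isLt; omega⟩ ∈ Tᶜ := Finset.orderEmbOfFin_mem _ _ _
    rw [hij] at hm1
    exact (Finset.mem_compl.1 hm2) hm1
  · exfalso
    rw [buildFun_ge T hT σ h1, buildFun_lt T hT σ h2] at hij
    have hm1 : T.orderEmbOfFin hT (σ ⟨j.val, h2⟩) ∈ T := Finset.orderEmbOfFin_mem _ _ _
    have hm2 : Tᶜ.orderEmbOfFin (card_compl_T T hT)
        ⟨i.val - k, by have := i.isLt; omega⟩ ∈ Tᶜ := Finset.orderEmbOfFin_mem _ _ _
    rw [← hij] at hm1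
    exact (Finset.mem_compl.1 hm2) hm1
  · rw [buildFun_ge T hT σ h1, buildFun_ge T hT σ h2] at hij
    have h3 := (Tᶜ.orderEmbOfFin (card_compl_T T hT)).injective hij
    have h4 : i.val - k = j.val - k := Fin.mk_eq_mk.1 h3
    omega

noncomputable def buildPerm : Equiv.Perm (Fin n) :=
  Equiv.ofBijective (buildFun T hT σ)
    (Finite.injective_iff_bijective.1 (buildFun_injective T hT σ))

lemma buildPerm_apply (i : Fin n) : buildPerm T hT σ i = buildFun T hT σ i := rfl

end build


lemma strictMonoAux {N n : ℕ} {g : Fin N → Fin n}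
    (h : ∀ (m : ℕ) (hm : m + 1 < N), g ⟨m, by omega⟩ < g ⟨m+1, hm⟩) : StrictMono g := by
  intro a b hab
  obtain ⟨a, ha⟩ := a
  obtain ⟨b, hb⟩ := b
  rw [Fin.mk_lt_mk] at hab
  induction b with
  | zero => omega
  | succ b ih =>
    rcases Nat.lt_or_ge a b with h' | h'
    · exact lt_trans (ih (by omega) h') (h b hb)
    · have : a = b := by omega
      subst this
      exact h a hb

section build2
variable {n k : ℕ} {T : Finset (Fin n)} {hT : T.card = k} {σ : Equiv.Perm (Fin k)}

lemma subset_ascSet_buildPerm (hk : k ≤ n) {S₀ : Finset ℕ}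
    (hS₀ : S₀ ⊆ Finset.range (k-1)) (hσ : S₀ ⊆ ascSet σ) :
    S₀ ∪ Finset.Ico k (n-1) ⊆ ascSet (buildPerm T hT σ) := by
  intro j hj
  rcases Finset.mem_union.1 hj with hj | hj
  · have hjk : j < k - 1 := Finset.mem_range.1 (hS₀ hj)
    have hjn : j + 1 < n := by omega
    rw [mem_ascSet]
    refine ⟨hjn, ?_⟩
    rw [buildPerm_apply, buildPerm_apply,
      buildFun_lt T hT σ (show ((⟨j, Nat.lt_of_succ_lt hjn⟩ : Fin n)).val < k from by
        show j < k; omega),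
      buildFun_lt T hT σ (show ((⟨j+1, hjn⟩ : Fin n)).val < k from by
        show j + 1 < k; omega)]
    apply (T.orderEmbOfFin hT).strictMono
    obtain ⟨h', hlt⟩ := (mem_ascSet σ j).1 (hσ hj)
    exact hlt
  · rw [Finset.mem_Ico] at hj
    have hjn : j + 1 < n := by omega
    rw [mem_ascSet]
    refine ⟨hjn, ?_⟩
    rw [buildPerm_apply, buildPerm_apply,
      buildFun_ge T hT σ (show ¬((⟨j, Nat.lt_of_succ_lt hjn⟩ : Fin n)).val < k from by
        show ¬ j < k; omega),
      buildFun_ge T hT σ (show ¬((⟨j+1, hjn⟩ : Fin n)).val < k from by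
        show ¬ j + 1 < k; omega)]
    apply (Tᶜ.orderEmbOfFin (card_compl_T T hT)).strictMono
    rw [Fin.mk_lt_mk]
    show j - k < j + 1 - k
    omega

lemma image_buildPerm (hk : k ≤ n) :
    Finset.univ.image (fun x : Fin k => buildPerm T hT σ (Fin.castLE hk x)) = T := by
  apply Finset.eq_of_subset_of_card_le
  · intro y hy
    obtain ⟨x, -, rfl⟩ := Finset.mem_image.1 hy
    rw [buildPerm_apply, buildFun_lt T hT σ (show ((Fin.castLE hk x)).val < k from x.isLt)]
    exact Finset.orderEmbOfFin_mem _ _ _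
  · have hinj : Function.Injective (fun x : Fin k => buildPerm T hT σ (Fin.castLE hk x)) :=
      fun a b hab => Fin.castLE_injective hk ((buildPerm T hT σ).injective hab)
    rw [hT, Finset.card_image_of_injective _ hinj, Finset.card_univ, Fintype.card_fin]

end build2


lemma exists_buildPerm {n k : ℕ} (hk : k ≤ n) {S₀ : Finset ℕ}
    (hS₀ : S₀ ⊆ Finset.range (k-1))
    (π : Equiv.Perm (Fin n)) (hasc : S₀ ∪ Finset.Ico k (n-1) ⊆ ascSet π) :
    ∃ (T : Finset (Fin n)) (hT : T.card = k) (σ : Equiv.Perm (Fin k)),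
      S₀ ⊆ ascSet σ ∧ buildPerm T hT σ = π := by
  have hinj : Function.Injective (fun x : Fin k => π (Fin.castLE hk x)) :=
    fun a b hab => Fin.castLE_injective hk (π.injective hab)
  set T := Finset.univ.image (fun x : Fin k => π (Fin.castLE hk x)) with hTdef
  have hT : T.card = k := by
    rw [hTdef, Finset.card_image_of_injective _ hinj, Finset.card_univ, Fintype.card_fin]
  have hmemT : ∀ x : Fin k, π (Fin.castLE hk x) ∈ T := fun x =>
    Finset.mem_image.2 ⟨x, Finset.mem_univ x, rfl⟩
  set σ0 : Fin k → Fin k :=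
    fun x => (T.orderIsoOfFin hT).symm ⟨π (Fin.castLE hk x), hmemT x⟩ with hσ0
  have hσ0inj : Function.Injective σ0 := by
    intro a b hab
    have h1 := (T.orderIsoOfFin hT).symm.injective hab
    have h2 : π (Fin.castLE hk a) = π (Fin.castLE hk b) := congrArg Subtype.val h1
    exact Fin.castLE_injective hk (π.injective h2)
  set σ : Equiv.Perm (Fin k) :=
    Equiv.ofBijective σ0 (Finite.injective_iff_bijective.1 hσ0inj) with hσdef
  have hσapp : ∀ x : Fin k, (T.orderIsoOfFin hT) (σ x) = ⟨π (Fin.castLE hk x), hmemT x⟩ :=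
    fun x => (T.orderIsoOfFin hT).apply_symm_apply _
  refine ⟨T, hT, σ, ?_, ?_⟩
  · intro j hj
    have hjk : j < k - 1 := Finset.mem_range.1 (hS₀ hj)
    have hjk1 : j + 1 < k := by omega
    rw [mem_ascSet]
    refine ⟨hjk1, ?_⟩
    have hπlt : π (Fin.castLE hk ⟨j, Nat.lt_of_succ_lt hjk1⟩)
        < π (Fin.castLE hk ⟨j+1, hjk1⟩) := by
      obtain ⟨h', hlt⟩ := (mem_ascSet π j).1 (hasc (Finset.mem_union_left _ hj))
      exact hlt
    exact (T.orderIsoOfFin hT).symm.strictMono (Subtype.mk_lt_mk.2 hπlt)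
  · apply Equiv.ext
    intro i
    rw [buildPerm_apply]
    by_cases h : i.val < k
    · rw [buildFun_lt T hT σ h, ← Finset.coe_orderIsoOfFin_apply, hσapp ⟨i.val, h⟩]
      show π (Fin.castLE hk ⟨i.val, h⟩) = π i
      congr 1
    · rw [buildFun_ge T hT σ h]
      set g : Fin (n-k) → Fin n :=
        fun m => π ⟨k + m.val, by have := m.isLt; omega⟩ with hg
      have hgmem : ∀ m, g m ∈ Tᶜ := by
        intro m
        rw [Finset.mem_compl]
        intro hmem
        obtain ⟨x, -, hx⟩ := Finset.mem_image.1 hmem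
        have h1 := π.injective hx
        have hval : x.val = k + m.val := congrArg Fin.val h1
        have := x.isLt
        omega
      have hgmono : StrictMono g := by
        apply strictMonoAux
        intro m hm
        have hasc' : (k + m) ∈ ascSet π :=
          hasc (Finset.mem_union_right _ (Finset.mem_Ico.2 ⟨by omega, by omega⟩))
        obtain ⟨h', hlt⟩ := (mem_ascSet π (k+m)).1 hasc'
        exact hlt
      have hgeq : g = ⇑(Tᶜ.orderEmbOfFin (card_compl_T T hT)) :=
        Finset.orderEmbOfFin_unique _ hgmem hgmono
      have h2 : π i = g ⟨i.val - k, by have := i.isLt; omega⟩ := by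
        rw [hg]
        show π i = π ⟨k + (i.val - k), _⟩
        congr 1
        exact Fin.ext (show i.val = k + (i.val - k) by omega)
      rw [h2, hgeq]

/-- L5 (crux): counting permutations with prescribed tail-run and head ascents. -/
lemma M_union (n k : ℕ) (hk : k < n) (S₀ : Finset ℕ) (hS₀ : S₀ ⊆ Finset.range (k-1)) :
    M n (S₀ ∪ Finset.Ico k (n-1)) = n.choose k * M k S₀ := by
  have hk' : k ≤ n := le_of_lt hk
  set Q := (Finset.powersetCard k (Finset.univ : Finset (Fin n))) ×ˢ
    ((Finset.univ : Finset (Equiv.Perm (Fin k))).filter fun σ => S₀ ⊆ ascSet σ) with hQdef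
  have hcard : ∀ a ∈ Q, (a : Finset (Fin n) × Equiv.Perm (Fin k)).1.card = k := fun a ha =>
    (Finset.mem_powersetCard.1 (Finset.mem_product.1 ha).1).2
  have hmem2 : ∀ a ∈ Q, S₀ ⊆ ascSet (a : Finset (Fin n) × Equiv.Perm (Fin k)).2 := fun a ha =>
    (Finset.mem_filter.1 (Finset.mem_product.1 ha).2).2
  have hbij : Q.card = ((Finset.univ : Finset (Equiv.Perm (Fin n))).filter
      (fun π => S₀ ∪ Finset.Ico k (n-1) ⊆ ascSet π)).card := by
    refine Finset.card_bij (fun a ha => buildPerm a.1 (hcard a ha) a.2) ?_ ?_ ?_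
    · intro a ha
      exact Finset.mem_filter.2 ⟨Finset.mem_univ _,
        subset_ascSet_buildPerm hk' hS₀ (hmem2 a ha)⟩
    · rintro ⟨T₁, σ₁⟩ ha₁ ⟨T₂, σ₂⟩ ha₂ h
      simp only at h
      have hT1 := image_buildPerm (T := T₁) (hT := hcard _ ha₁) (σ := σ₁) hk'
      have hT2 := image_buildPerm (T := T₂) (hT := hcard _ ha₂) (σ := σ₂) hk'
      have hTeq : T₁ = T₂ := by rw [← hT1, ← hT2, h]
      subst hTeq
      have hσeq : σ₁ = σ₂ := by
        apply Equiv.ext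
        intro x
        have happ := congrArg (fun e : Equiv.Perm (Fin n) => e (Fin.castLE hk' x)) h
        rw [buildPerm_apply, buildPerm_apply,
          buildFun_lt T₁ (hcard _ ha₁) σ₁ (show ((Fin.castLE hk' x)).val < k from x.isLt),
          buildFun_lt T₁ (hcard _ ha₂) σ₂ (show ((Fin.castLE hk' x)).val < k from x.isLt)]
          at happ
        have h1 := (T₁.orderEmbOfFin (hcard _ ha₁)).injective happ
        have h2 : x.val = ((⟨(Fin.castLE hk' x).val, x.isLt⟩ : Fin k)).val := rfl
        calc σ₁ x = σ₁ ⟨(Fin.castLE hk' x).val, x.isLt⟩ := by congr 1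
          _ = σ₂ ⟨(Fin.castLE hk' x).val, x.isLt⟩ := h1
          _ = σ₂ x := by congr 1
      rw [hσeq]
    · intro π hπ
      have hasc := (Finset.mem_filter.1 hπ).2
      obtain ⟨T, hT, σ, hσ, heq⟩ := exists_buildPerm hk' hS₀ π hasc
      refine ⟨(T, σ), ?_, heq⟩
      exact Finset.mem_product.2 ⟨Finset.mem_powersetCard.2 ⟨Finset.subset_univ _, hT⟩,
        Finset.mem_filter.2 ⟨Finset.mem_univ _, hσ⟩⟩
  have hQcard : Q.card = n.choose k * M k S₀ := by
    rw [hQdef, Finset.card_product, Finset.card_powersetCard, Finset.card_univ,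
      Fintype.card_fin, M]
  rw [M, ← hbij, hQcard]

/-- The key recurrence for Eulerian polynomials. -/
lemma eulerianPoly_recur (n : ℕ) (hn : 1 ≤ n) (t : ℝ) :
    eulerianPoly n t
      = ∑ k ∈ Finset.range n, (n.choose k : ℝ) * (t-1)^(n-1-k) * eulerianPoly k t := by
  rw [eulerianPoly_eq_sum_subsets]
  have hmaps : ∀ S ∈ (Finset.range (n-1)).powerset, key n S ∈ Finset.range n := by
    intro S _
    exact Finset.mem_range.2 (by have := key_le n S; omega)
  rw [← Finset.sum_fiberwise_of_maps_to hmaps (fun S => (t-1) ^ S.card * (M n S : ℝ))]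
  refine Finset.sum_congr rfl fun k hk => ?_
  rw [Finset.mem_range] at hk
  have hfiber : ∑ S ∈ (Finset.range (n-1)).powerset.filter (fun S => key n S = k),
        (t-1) ^ S.card * (M n S : ℝ)
      = ∑ S₀ ∈ (Finset.range (k-1)).powerset,
        (t-1) ^ (S₀.card + (n-1-k)) * (M n (S₀ ∪ Finset.Ico k (n-1)) : ℝ) := by
    refine Finset.sum_nbij' (fun S => S ∩ Finset.range (k-1))
      (fun S₀ => S₀ ∪ Finset.Ico k (n-1)) ?_ ?_ ?_ ?_ ?_
    · intro S hS
      rw [Finset.mem_filter, Finset.mem_powerset] at hS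
      exact Finset.mem_powerset.2 (Finset.inter_subset_right)
    · intro S₀ hS₀
      rw [Finset.mem_powerset] at hS₀
      rw [Finset.mem_filter, Finset.mem_powerset]
      constructor
      · apply Finset.union_subset
        · exact hS₀.trans (by intro x; simp only [Finset.mem_range]; omega)
        · intro x hx; rw [Finset.mem_Ico] at hx; exact Finset.mem_range.2 hx.2
      · exact key_union n k hk S₀ hS₀
    · intro S hS
      rw [Finset.mem_filter, Finset.mem_powerset] at hS
      show S ∩ Finset.range (k-1) ∪ Finset.Ico k (n-1) = S
      conv_rhs => rw [eq_union_of_key n S hS.1]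
      rw [hS.2]
    · intro S₀ hS₀
      rw [Finset.mem_powerset] at hS₀
      have : Finset.Ico k (n-1) ∩ Finset.range (k-1) = ∅ := by
        ext x
        simp only [Finset.mem_inter, Finset.mem_Ico, Finset.mem_range, Finset.notMem_empty,
          iff_false]
        omega
      show (S₀ ∪ Finset.Ico k (n-1)) ∩ Finset.range (k-1) = S₀
      rw [Finset.union_inter_distrib_right, this, Finset.union_empty,
        Finset.inter_eq_left.2 hS₀]
    · intro S hS
      rw [Finset.mem_filter, Finset.mem_powerset] at hS
      have hrw : S ∩ Finset.range (k-1) ∪ Finset.Ico k (n-1) = S := by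
        conv_rhs => rw [eq_union_of_key n S hS.1]
        rw [hS.2]
      have hdisj : Disjoint (S ∩ Finset.range (k-1)) (Finset.Ico k (n-1)) := by
        rw [Finset.disjoint_left]
        intro x hx hx'
        rw [Finset.mem_inter, Finset.mem_range] at hx
        rw [Finset.mem_Ico] at hx'
        omega
      have hcard : S.card = (S ∩ Finset.range (k-1)).card + (n-1-k) := by
        conv_lhs => rw [← hrw]
        rw [Finset.card_union_of_disjoint hdisj, Nat.card_Ico]
      show (t-1) ^ S.card * (M n S : ℝ)
          = (t-1) ^ ((S ∩ Finset.range (k-1)).card + (n-1-k))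
            * (M n (S ∩ Finset.range (k-1) ∪ Finset.Ico k (n-1)) : ℝ)
      rw [hrw, ← hcard]
  rw [hfiber]
  have hfinal : ∀ S₀ ∈ (Finset.range (k-1)).powerset,
      (t-1) ^ (S₀.card + (n-1-k)) * (M n (S₀ ∪ Finset.Ico k (n-1)) : ℝ)
      = (n.choose k : ℝ) * (t-1)^(n-1-k) * ((t-1) ^ S₀.card * (M k S₀ : ℝ)) := by
    intro S₀ hS₀
    rw [Finset.mem_powerset] at hS₀
    rw [M_union n k hk S₀ hS₀, pow_add, Nat.cast_mul]
    ring
  rw [Finset.sum_congr rfl hfinal, ← Finset.mul_sum, ← eulerianPoly_eq_sum_subsets]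

/-- Bound on Eulerian polynomials. -/
lemma abs_eulerianPoly_le (n : ℕ) (t : ℝ) :
    |eulerianPoly n t| ≤ (n.factorial : ℝ) * (max 1 |t|) ^ n := by
  set C := max 1 |t| with hC
  have hC1 : (1:ℝ) ≤ C := le_max_left _ _
  rw [eulerianPoly_eq_sum_perm]
  calc |∑ π : Equiv.Perm (Fin n), t ^ ascentCount π|
      ≤ ∑ π : Equiv.Perm (Fin n), |t ^ ascentCount π| := Finset.abs_sum_le_sum_abs _ _
    _ ≤ ∑ π : Equiv.Perm (Fin n), C ^ n := by
        refine Finset.sum_le_sum fun π _ => ?_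
        rw [abs_pow]
        calc |t| ^ ascentCount π ≤ C ^ ascentCount π :=
              pow_le_pow_left₀ (abs_nonneg t) (le_max_right 1 |t|) _
          _ ≤ C ^ n := by
              apply pow_le_pow_right₀ hC1
              calc ascentCount π ≤ (Finset.range (n-1)).card :=
                    Finset.card_le_card (ascSet_subset π)
                _ ≤ n := by rw [Finset.card_range]; omega
    _ = (n.factorial : ℝ) * C ^ n := by
        rw [Finset.sum_const, Finset.card_univ, Fintype.card_perm, Fintype.card_fin,
          nsmul_eq_mul]

lemma cauchy_key (t u : ℝ) (n : ℕ) (hn : 1 ≤ n) :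
    ∑ k ∈ Finset.range (n+1),
      (eulerianPoly k t * u ^ k / (k.factorial : ℝ)) *
        ((if n - k = 0 then t else 0) - (u*(t-1)) ^ (n-k) / ((n-k).factorial : ℝ))
      = 0 := by
  have hsplit : ∀ k ∈ Finset.range (n+1),
      (eulerianPoly k t * u ^ k / (k.factorial : ℝ)) *
        ((if n - k = 0 then t else 0) - (u*(t-1)) ^ (n-k) / ((n-k).factorial : ℝ))
      = (eulerianPoly k t * u ^ k / (k.factorial : ℝ)) * (if n - k = 0 then t else 0)
        - (eulerianPoly k t * u ^ k / (k.factorial : ℝ))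
          * ((u*(t-1)) ^ (n-k) / ((n-k).factorial : ℝ)) := fun k _ => by ring
  rw [Finset.sum_congr rfl hsplit, Finset.sum_sub_distrib]
  have h1 : ∑ k ∈ Finset.range (n+1),
      (eulerianPoly k t * u ^ k / (k.factorial : ℝ)) * (if n - k = 0 then t else 0)
      = eulerianPoly n t * u ^ n / (n.factorial : ℝ) * t := by
    rw [Finset.sum_eq_single_of_mem n (Finset.self_mem_range_succ n)]
    · rw [Nat.sub_self, if_pos rfl]
    · intro k hk hkn
      rw [Finset.mem_range] at hk
      rw [if_neg (by omega), mul_zero]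
  have h2 : ∀ k ∈ Finset.range n,
      (eulerianPoly k t * u ^ k / (k.factorial : ℝ))
        * ((u*(t-1)) ^ (n-k) / ((n-k).factorial : ℝ))
      = ((n.choose k : ℝ) * (t-1)^(n-1-k) * eulerianPoly k t) * ((t-1) * (u ^ n / (n.factorial : ℝ))) := by
    intro k hk
    rw [Finset.mem_range] at hk
    have hkn : k ≤ n := hk.le
    have hfact : ((n.choose k : ℝ)) * (k.factorial : ℝ) * ((n-k).factorial : ℝ)
        = (n.factorial : ℝ) := by
      exact_mod_cast Nat.choose_mul_factorial_mul_factorial hkn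
    have hu : u ^ k * u ^ (n-k) = u ^ n := by rw [← pow_add]; congr 1; omega
    have hs : (t-1) ^ (n-1-k) * (t-1) = (t-1) ^ (n-k) := by
      rw [← pow_succ]; congr 1; omega
    have hk0 : (k.factorial : ℝ) ≠ 0 := Nat.cast_ne_zero.2 (Nat.factorial_ne_zero k)
    have hnk0 : ((n-k).factorial : ℝ) ≠ 0 := Nat.cast_ne_zero.2 (Nat.factorial_ne_zero _)
    have hn0 : (n.factorial : ℝ) ≠ 0 := Nat.cast_ne_zero.2 (Nat.factorial_ne_zero n)
    rw [mul_pow, div_mul_div_comm]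
    rw [div_eq_iff (by positivity)]
    field_simp
    rw [← hs, ← hu, ← hfact]
    ring
  rw [h1, Finset.sum_range_succ, Finset.sum_congr rfl h2, ← Finset.sum_mul,
    ← eulerianPoly_recur n hn t, Nat.sub_self]
  simp only [pow_zero, Nat.factorial_zero, Nat.cast_one, div_one, mul_one]
  ring

theorem eulerianPoly_egf (t : ℝ) (ht : t ≠ 1) :
    ∃ ε > 0, ∀ u : ℝ, |u| < ε → t ≠ Real.exp (u * (t - 1)) →
      HasSum (fun n : ℕ => eulerianPoly n t * u ^ n / (n.factorial : ℝ))
        ((t - 1) / (t - Real.exp (u * (t - 1)))) := by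
  set C := max 1 |t| with hC
  have hC1 : (1:ℝ) ≤ C := le_max_left _ _
  have hC0 : (0:ℝ) < C := lt_of_lt_of_le one_pos hC1
  refine ⟨1 / (2*C), by positivity, ?_⟩
  intro u hu hne
  set f : ℕ → ℝ := fun n => eulerianPoly n t * u ^ n / (n.factorial : ℝ) with hf
  set g : ℕ → ℝ := fun n =>
    (if n = 0 then t else 0) - (u*(t-1)) ^ n / (n.factorial : ℝ) with hg
  -- f is norm-summable
  have hfb : ∀ n, ‖f n‖ ≤ (1/2 : ℝ) ^ n := by
    intro n
    have h1 : ‖f n‖ = |eulerianPoly n t| * |u| ^ n / (n.factorial : ℝ) := by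
      rw [hf]
      rw [Real.norm_eq_abs, abs_div, abs_mul, abs_pow, Nat.abs_cast]
    rw [h1]
    have h2 : |eulerianPoly n t| * |u| ^ n / (n.factorial : ℝ)
        ≤ ((n.factorial : ℝ) * C ^ n) * |u| ^ n / (n.factorial : ℝ) := by
      gcongr
      exact abs_eulerianPoly_le n t
    refine h2.trans ?_
    have hfac : ((n.factorial : ℝ)) ≠ 0 := by positivity
    have h3 : (n.factorial : ℝ) * C ^ n * |u| ^ n / (n.factorial : ℝ) = (C*|u|)^n := by
      rw [mul_pow]
      field_simp
    rw [h3]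
    apply pow_le_pow_left₀ (by positivity)
    calc C * |u| ≤ C * (1/(2*C)) := by gcongr
      _ = 1/2 := by field_simp
  have hfs : Summable fun n => ‖f n‖ :=
    Summable.of_nonneg_of_le (fun n => norm_nonneg _) hfb
      (summable_geometric_of_lt_one (by norm_num) (by norm_num))
  -- g sums to t - exp(u(t-1))
  have hgsum : HasSum g (t - Real.exp (u*(t-1))) := by
    have h1 : HasSum (fun n => (u*(t-1))^n / (n.factorial : ℝ)) (Real.exp (u*(t-1))) := by
      rw [Real.exp_eq_exp_ℝ]
      exact NormedSpace.expSeries_div_hasSum_exp (u*(t-1))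
    have h2 : HasSum (fun n : ℕ => if n = 0 then t else 0) t := by
      have := hasSum_ite_eq (0:ℕ) t
      simpa using this
    exact h2.sub h1
  -- g is norm-summable
  have hgs : Summable fun n => ‖g n‖ := by
    have h1 : Summable fun n : ℕ => |u*(t-1)| ^ n / (n.factorial : ℝ) :=
      Real.summable_pow_div_factorial _
    have h2 : Summable fun n : ℕ => (if n = 0 then |t| else 0) :=
      (hasSum_ite_eq (0:ℕ) |t|).summable
    refine Summable.of_nonneg_of_le (fun n => norm_nonneg _) ?_ (h2.add h1)
    intro n
    rw [hg, Real.norm_eq_abs]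
    refine (abs_sub _ _).trans ?_
    gcongr
    · split_ifs <;> simp [le_refl, abs_nonneg]
    · rw [abs_div, abs_pow, Nat.abs_cast]
  have hfsum : Summable f := hfs.of_norm
  -- Cauchy product
  have hcauchy := tsum_mul_tsum_eq_tsum_sum_range_of_summable_norm hfs hgs
  have hkey : ∀ n : ℕ, ∑ k ∈ Finset.range (n+1), f k * g (n-k)
      = if n = 0 then t - 1 else 0 := by
    intro n
    rcases Nat.eq_zero_or_pos n with h | h
    · subst h
      rw [if_pos rfl]
      simp [hf, hg, eulerianPoly]
    · rw [if_neg (by omega)]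
      exact cauchy_key t u n h
  have hrhs : ∑' n : ℕ, ∑ k ∈ Finset.range (n+1), f k * g (n-k) = t - 1 := by
    rw [tsum_congr hkey]
    exact tsum_ite_eq 0 (fun _ => t-1)
  rw [hrhs, hgsum.tsum_eq] at hcauchy
  have hden : t - Real.exp (u*(t-1)) ≠ 0 := sub_ne_zero.2 hne
  have hF : ∑' n, f n = (t - 1) / (t - Real.exp (u*(t-1))) := by
    rw [eq_div_iff hden]
    exact hcauchy
  have := hfsum.hasSum
  rw [hF] at this
  exact this
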